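/- Let h ≥ 1, L ≥ 1, and M ≥ 1 be natural numbers and let f be a uniformly random function from Fin h to Fin L (each of the L^h functions equally likely). Then the expected number of elements i of Fin h such that the fiber f⁻¹({f(i)}) has at most M elements equals L·∑_{x=1}^{M} x·C(h,x)·(1/L)^x·(1 − 1/L)^{h−x}. -/

import Mathlib

open Finset

section Aux
open Polynomial


lemma count_fiber (h L : ℕ) (s : Fin L) (c : ℕ) :
    (univ.filter fun f : Fin h → Fin L =>
        (univ.filter fun j : Fin h => f j = s).card = c).card
      = h.choose c * (L - 1) ^ (h - c) := by
  have key : ∑ f : Fin h → Fin L, (X : ℕ[X]) ^ (univ.filter fun j : Fin h => f j = s).card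
      = (X + C (L - 1 : ℕ)) ^ h := by
    have h1 : ∀ f : Fin h → Fin L,
        (X : ℕ[X]) ^ (univ.filter fun j : Fin h => f j = s).card
          = ∏ j : Fin h, (if f j = s then (X : ℕ[X]) else 1) := by
      intro f
      rw [prod_ite, prod_const, prod_const, one_pow, mul_one]
    simp_rw [h1]
    rw [← Fintype.piFinset_univ, Finset.sum_prod_piFinset univ
      (fun (_ : Fin h) (t : Fin L) => if t = s then (X : ℕ[X]) else 1)]
    have h2 : ∑ t : Fin L, (if t = s then (X : ℕ[X]) else 1) = X + C (L - 1 : ℕ) := by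
      rw [sum_ite, sum_const, sum_const, filter_eq', if_pos (mem_univ s), card_singleton,
        one_smul, nsmul_eq_mul, mul_one]
      congr 1
      rw [← C_eq_natCast]
      congr 1
      simp [filter_ne', card_erase_of_mem]
    simp_rw [h2, prod_const, card_univ, Fintype.card_fin]
  have := congrArg (fun p : ℕ[X] => p.coeff c) key
  simp only [finset_sum_coeff, coeff_X_pow, coeff_X_add_C_pow] at this
  have e : (∑ f : Fin h → Fin L, if (univ.filter fun j : Fin h => f j = s).card = c then 1 else 0)
      = ∑ f : Fin h → Fin L, if c = (univ.filter fun j : Fin h => f j = s).card then 1 else 0 :=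
    Finset.sum_congr rfl fun f _ => by simp [eq_comm]
  rw [card_filter, e, this, mul_comm, Nat.cast_id]


lemma card_decomp (h L M : ℕ) (f : Fin h → Fin L) :
    ((univ.filter fun i : Fin h =>
        (univ.filter fun j : Fin h => f j = f i).card ≤ M).card : ℝ)
      = ∑ s : Fin L, (if (univ.filter fun j : Fin h => f j = s).card ≤ M
          then ((univ.filter fun j : Fin h => f j = s).card : ℝ) else 0) := by
  classical
  rw [card_eq_sum_card_fiberwise (f := f) (t := univ) (fun i _ => mem_univ (f i))]
  push_cast
  refine Finset.sum_congr rfl fun s _ => ?_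
  by_cases hc : (univ.filter fun j : Fin h => f j = s).card ≤ M
  · rw [if_pos hc, filter_filter]
    congr 2
    ext i
    simp only [mem_filter, mem_univ, true_and]
    constructor
    · exact fun ⟨_, h2⟩ => h2
    · intro h2
      refine ⟨?_, h2⟩
      rw [h2]; exact hc
  · rw [if_neg hc, filter_filter]
    norm_num
    rintro i h1 h2
    rw [h2] at h1
    exact hc h1

end Aux

/-- With `h` packets placed uniformly at random into `L` slots (a uniformly
random `f : Fin h → Fin L`), the expected number of packets `i` whose slot contains at
most `M` packets equals `L * ∑_{x=1}^{M} x C(h,x) (1/L)^x (1 - 1/L)^(h-x)`. -/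
theorem expected_successful_packets_mpr (h L M : ℕ) (hh : 1 ≤ h) (hL : 1 ≤ L) (hM : 1 ≤ M) :
    (∑ f : Fin h → Fin L,
        ((univ.filter fun i : Fin h =>
            (univ.filter fun j : Fin h => f j = f i).card ≤ M).card : ℝ)) / (L : ℝ) ^ h
      = (L : ℝ) * ∑ x ∈ Finset.Icc 1 M,
          (x : ℝ) * (h.choose x : ℝ) * (1 / (L : ℝ)) ^ x * (1 - 1 / (L : ℝ)) ^ (h - x) := by
  classical
  have hL0 : (L : ℝ) ≠ 0 := by positivity
  have hcastL : ((L - 1 : ℕ) : ℝ) = (L : ℝ) - 1 := by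
    rw [Nat.cast_sub hL, Nat.cast_one]
  set G : ℕ → ℝ := fun c => if 1 ≤ c ∧ c ≤ M
      then (c : ℝ) * (h.choose c : ℝ) * ((L : ℝ) - 1) ^ (h - c) else 0 with hG
  -- step 1: numerator
  have step1 : (∑ f : Fin h → Fin L,
      ((univ.filter fun i : Fin h =>
          (univ.filter fun j : Fin h => f j = f i).card ≤ M).card : ℝ))
      = (L : ℝ) * ∑ c ∈ Finset.range (h + 1), G c := by
    simp_rw [card_decomp h L M]
    rw [Finset.sum_comm]
    have inner : ∀ s : Fin L,
        (∑ f : Fin h → Fin L, if (univ.filter fun j : Fin h => f j = s).card ≤ M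
            then ((univ.filter fun j : Fin h => f j = s).card : ℝ) else 0)
          = ∑ c ∈ Finset.range (h + 1), G c := by
      intro s
      rw [← Finset.sum_fiberwise_of_maps_to
        (g := fun f : Fin h → Fin L => (univ.filter fun j : Fin h => f j = s).card)
        (t := Finset.range (h + 1))
        (fun f _ => Finset.mem_range.2 (Nat.lt_succ_of_le (by
          simpa using Finset.card_filter_le univ (fun j : Fin h => f j = s))))]
      refine Finset.sum_congr rfl fun c hc => ?_
      have e1 : ∀ f ∈ (univ : Finset (Fin h → Fin L)).filter
          (fun f => (univ.filter fun j : Fin h => f j = s).card = c),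
          (if (univ.filter fun j : Fin h => f j = s).card ≤ M
            then ((univ.filter fun j : Fin h => f j = s).card : ℝ) else 0)
          = (if c ≤ M then (c : ℝ) else 0) := by
        intro f hf
        rw [(Finset.mem_filter.1 hf).2]
      rw [Finset.sum_congr rfl e1, Finset.sum_const, count_fiber, nsmul_eq_mul]
      rw [hG]
      push_cast [hcastL]
      by_cases h1 : c ≤ M
      · rcases Nat.eq_zero_or_pos c with rfl | hc1
        · simp
        · rw [if_pos h1, if_pos ⟨hc1, h1⟩]; ring
      · rw [if_neg h1, if_neg (by tauto), mul_zero]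
    simp_rw [inner, Finset.sum_const, card_univ, Fintype.card_fin, nsmul_eq_mul]
  rw [step1, mul_div_assoc]
  congr 1
  have hTU : ∑ c ∈ Finset.range (h + 1), G c = ∑ c ∈ Finset.Icc 1 M, G c := by
    have e1 : ∑ c ∈ Finset.range (h + 1), G c = ∑ c ∈ Finset.range (h + M + 1), G c :=
      Finset.sum_subset (Finset.range_subset_range.2 (by omega)) (fun c _ hc => by
        have : h < c := by simpa using hc
        simp [hG, Nat.choose_eq_zero_of_lt this])
    have e2 : ∑ c ∈ Finset.Icc 1 M, G c = ∑ c ∈ Finset.range (h + M + 1), G c :=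
      Finset.sum_subset (fun c hc => Finset.mem_range.2 (by
        have := (Finset.mem_Icc.1 hc).2; omega)) (fun c _ hc => by
        rw [Finset.mem_Icc] at hc
        simp only [hG]
        rw [if_neg hc])
    rw [e1, ← e2]
  rw [hTU, div_eq_iff (pow_ne_zero _ hL0), Finset.sum_mul]
  refine Finset.sum_congr rfl fun x hx => ?_
  rw [Finset.mem_Icc] at hx
  rw [hG]
  simp only []
  rw [if_pos hx]
  by_cases hxh : x ≤ h
  · have hpow : (L : ℝ) ^ x * (L : ℝ) ^ (h - x) = (L : ℝ) ^ h := by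
      rw [← pow_add, Nat.add_sub_cancel' hxh]
    have h2 : (1 - 1 / (L : ℝ)) = ((L : ℝ) - 1) / L := by field_simp
    have key : (1 / (L : ℝ)) ^ x * (((L : ℝ) - 1) / L) ^ (h - x)
        = ((L : ℝ) - 1) ^ (h - x) / (L : ℝ) ^ h := by
      rw [div_pow, div_pow, one_pow, div_mul_div_comm, one_mul, hpow]
    rw [h2]
    have e3 : (x : ℝ) * (h.choose x : ℝ) * (1 / (L : ℝ)) ^ x * (((L : ℝ) - 1) / L) ^ (h - x)
        * (L : ℝ) ^ h
        = (x : ℝ) * (h.choose x : ℝ)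
          * ((1 / (L : ℝ)) ^ x * (((L : ℝ) - 1) / L) ^ (h - x)) * (L : ℝ) ^ h := by ring
    rw [e3, key]
    field_simp
  · have : h < x := by omega
    simp [Nat.choose_eq_zero_of_lt this]
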